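/- Let n ≥ 2 be an integer, m > 0 a real number, and ε ∈ {−1, +1}. Then the function f : {(x,t) ∈ ℝⁿ × ℝ : xₙ > 0} → ℝ defined by f(x,t) = ε·√((n−1)m)·t satisfies the quasi-Einstein PDE system for (f, m, λ) with λ = −(n−1). (In particular, (ℍⁿ × ℝ, g, ∇f, −(n−1)) is a quasi-Einstein metric whose potential gradient ∇f = ε·√((n−1)m)·∂ₜ is a Killing field, so Hess f = 0.) -/

import Mathlib

open Real

/-- The index of the last coordinate `xₙ` in `Fin n`. -/
def lastIdx (n : ℕ) (hn : 2 ≤ n) : Fin n := ⟨n - 1, by omega⟩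

/-- Partial derivative of `f` in the `i`-th space coordinate at the point `p = (x, t)`. -/
noncomputable def partialX (n : ℕ) (f : (Fin n → ℝ) × ℝ → ℝ) (i : Fin n)
    (p : (Fin n → ℝ) × ℝ) : ℝ :=
  deriv (fun s => f (Function.update p.1 i s, p.2)) (p.1 i)

/-- Partial derivative of `f` in the `t` coordinate at the point `p = (x, t)`. -/
noncomputable def partialT (n : ℕ) (f : (Fin n → ℝ) × ℝ → ℝ)
    (p : (Fin n → ℝ) × ℝ) : ℝ :=
  deriv (fun s => f (p.1, s)) p.2

/-- The quasi-Einstein PDE system for `(f, m, λ)` on the half-space model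
`{(x,t) ∈ ℝⁿ × ℝ : xₙ > 0}` of `ℍⁿ × ℝ` with metric `g = xₙ⁻²·Σᵢ dxᵢ² + dt²`. -/
def QESystem (n : ℕ) (hn : 2 ≤ n) (m lam : ℝ) (f : (Fin n → ℝ) × ℝ → ℝ) : Prop :=
  ∀ p : (Fin n → ℝ) × ℝ, 0 < p.1 (lastIdx n hn) →
    -- (1)  xₙ²·∂²f/∂xᵢ² − xₙ·∂f/∂xₙ = (xₙ²/m)·(∂f/∂xᵢ)² + λ + (n−1),  i < n
    (∀ i : Fin n, (i : ℕ) < n - 1 →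
      (p.1 (lastIdx n hn)) ^ 2 * partialX n (partialX n f i) i p
        - p.1 (lastIdx n hn) * partialX n f (lastIdx n hn) p
      = (p.1 (lastIdx n hn)) ^ 2 / m * (partialX n f i p) ^ 2 + lam + ((n : ℝ) - 1)) ∧
    -- (2)  xₙ·∂f/∂xₙ + xₙ²·∂²f/∂xₙ² = (xₙ²/m)·(∂f/∂xₙ)² + λ + (n−1)
    (p.1 (lastIdx n hn) * partialX n f (lastIdx n hn) p
        + (p.1 (lastIdx n hn)) ^ 2 * partialX n (partialX n f (lastIdx n hn)) (lastIdx n hn) p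
      = (p.1 (lastIdx n hn)) ^ 2 / m * (partialX n f (lastIdx n hn) p) ^ 2
        + lam + ((n : ℝ) - 1)) ∧
    -- (3)  ∂²f/∂t² = (1/m)·(∂f/∂t)² + λ
    (partialT n (partialT n f) p = (1 / m) * (partialT n f p) ^ 2 + lam) ∧
    -- (4)  ∂²f/∂xᵢ∂xⱼ = (1/m)·(∂f/∂xᵢ)·(∂f/∂xⱼ),  i < j < n
    (∀ i j : Fin n, (i : ℕ) < (j : ℕ) → (j : ℕ) < n - 1 →
      partialX n (partialX n f j) i p = (1 / m) * partialX n f i p * partialX n f j p) ∧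
    -- (5)  xₙ²·∂²f/∂xᵢ∂xₙ + xₙ·∂f/∂xᵢ = (xₙ²/m)·(∂f/∂xᵢ)·(∂f/∂xₙ),  i < n
    (∀ i : Fin n, (i : ℕ) < n - 1 →
      (p.1 (lastIdx n hn)) ^ 2 * partialX n (partialX n f (lastIdx n hn)) i p
          + p.1 (lastIdx n hn) * partialX n f i p
        = (p.1 (lastIdx n hn)) ^ 2 / m * partialX n f i p * partialX n f (lastIdx n hn) p) ∧
    -- (6)  ∂²f/∂xᵢ∂t = (1/m)·(∂f/∂xᵢ)·(∂f/∂t),  i ≤ n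
    (∀ i : Fin n,
      partialX n (partialT n f) i p = (1 / m) * partialX n f i p * partialT n f p)

/-- **Example 1.** The function `f(x,t) = ε·√((n−1)m)·t` (with `ε = ±1`) satisfies the
quasi-Einstein PDE system on `ℍⁿ × ℝ` with `λ = −(n−1)`. -/
theorem linear_potential_is_quasiEinstein
    (n : ℕ) (hn : 2 ≤ n) (m : ℝ) (hm : 0 < m)
    (ε : ℝ) (hε : ε = -1 ∨ ε = 1) :
    QESystem n hn m (-((n : ℝ) - 1))
      (fun p : (Fin n → ℝ) × ℝ => ε * Real.sqrt (((n : ℝ) - 1) * m) * p.2) := by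
  intro p hp
  set c := ε * Real.sqrt (((n : ℝ) - 1) * m) with hc
  have hX : ∀ (g : (Fin n → ℝ) × ℝ → ℝ), (∀ q, g q = c * q.2) →
      ∀ i q, partialX n g i q = 0 := by
    intro g hg i q
    have : (fun s => g (Function.update q.1 i s, q.2)) = fun _ => c * q.2 := by
      funext s; exact hg _
    rw [partialX, this, deriv_const]
  have hf : ∀ q : (Fin n → ℝ) × ℝ,
      (fun p : (Fin n → ℝ) × ℝ => ε * Real.sqrt (((n : ℝ) - 1) * m) * p.2) q = c * q.2 :=
    fun q => rfl
  have hT : ∀ q, partialT n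
      (fun p : (Fin n → ℝ) × ℝ => ε * Real.sqrt (((n : ℝ) - 1) * m) * p.2) q = c := by
    intro q
    rw [partialT]
    simp only
    rw [deriv_const_mul_field c]
    simp
  have hXf := hX _ hf
  have hXT : ∀ i q, partialX n (partialT n
      (fun p : (Fin n → ℝ) × ℝ => ε * Real.sqrt (((n : ℝ) - 1) * m) * p.2)) i q = 0 := by
    intro i q
    rw [partialX]
    have : (fun s => partialT n
        (fun p : (Fin n → ℝ) × ℝ => ε * Real.sqrt (((n : ℝ) - 1) * m) * p.2)
        (Function.update q.1 i s, q.2)) = fun _ => c := by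
      funext s; exact hT _
    rw [this, deriv_const]
  have hXX : ∀ i j q, partialX n (partialX n
      (fun p : (Fin n → ℝ) × ℝ => ε * Real.sqrt (((n : ℝ) - 1) * m) * p.2) j) i q = 0 := by
    intro i j q
    rw [partialX]
    have : (fun s => partialX n
        (fun p : (Fin n → ℝ) × ℝ => ε * Real.sqrt (((n : ℝ) - 1) * m) * p.2) j
        (Function.update q.1 i s, q.2)) = fun _ => 0 := by
      funext s; exact hXf _ _
    rw [this, deriv_const]
  have hTT : ∀ q, partialT n (partialT n
      (fun p : (Fin n → ℝ) × ℝ => ε * Real.sqrt (((n : ℝ) - 1) * m) * p.2)) q = 0 := by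
    intro q
    rw [partialT]
    have : (fun s => partialT n
        (fun p : (Fin n → ℝ) × ℝ => ε * Real.sqrt (((n : ℝ) - 1) * m) * p.2)
        (q.1, s)) = fun _ => c := by
      funext s; exact hT _
    rw [this, deriv_const]
  have hε2 : ε ^ 2 = 1 := by rcases hε with h | h <;> simp [h]
  have hn1 : (0:ℝ) ≤ ((n : ℝ) - 1) * m := by
    apply mul_nonneg _ hm.le
    have : (2:ℝ) ≤ (n:ℝ) := by exact_mod_cast hn
    linarith
  have hc2 : c ^ 2 = ((n : ℝ) - 1) * m := by
    rw [hc, mul_pow, hε2, one_mul, sq_sqrt hn1]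
  refine ⟨?_, ?_, ?_, ?_, ?_, ?_⟩
  · intro i _
    rw [hXX, hXf, hXf]
    ring
  · rw [hXX, hXf]
    ring
  · rw [hTT, hT, hc2]
    field_simp
    ring
  · intro i j _ _
    rw [hXX, hXf, hXf]
    ring
  · intro i _
    rw [hXX, hXf, hXf]
    ring
  · intro i
    rw [hXT, hXf]
    ring
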